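/- Let A be a finite nonempty set of integers. Then there exists an integer N such that for all k ≥ N, |kA - kA| ≥ |kA + kA|, i.e., |kA - kA| ≥ |2kA|. In particular, no finite set A satisfies |cA + cA| > |cA - cA| for every positive integer c. -/

import Mathlib

open Finset Pointwise

/-- `itSum k A` is the k-fold sumset A + A + ⋯ + A (with `itSum 0 A = {0}`). -/
def itSum : ℕ → Finset ℤ → Finset ℤ
  | 0, _ => {0}
  | n+1, A => A + itSum n A

/-- `gDiff s d A = sA - dA`. -/
def gDiff (s d : ℕ) (A : Finset ℤ) : Finset ℤ := itSum s A - itSum d A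

lemma itSum_zero (A : Finset ℤ) : itSum 0 A = {0} := rfl
lemma itSum_succ (n : ℕ) (A : Finset ℤ) : itSum (n+1) A = A + itSum n A := rfl

lemma itSum_one (A : Finset ℤ) : itSum 1 A = A := by
  rw [itSum_succ, itSum_zero]
  exact add_zero A

lemma itSum_add (a b : ℕ) (A : Finset ℤ) :
    itSum (a + b) A = itSum a A + itSum b A := by
  induction a with
  | zero => rw [Nat.zero_add, itSum_zero]; exact (zero_add _).symm
  | succ n ih =>
    have : n + 1 + b = (n + b) + 1 := by omega
    rw [this, itSum_succ, ih, itSum_succ, add_assoc]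

lemma mem_itSum_add {x y : ℤ} {a b : ℕ} {A : Finset ℤ} (hx : x ∈ itSum a A)
    (hy : y ∈ itSum b A) : x + y ∈ itSum (a + b) A := by
  rw [itSum_add]
  exact Finset.add_mem_add hx hy

lemma itSum_subset {A B : Finset ℤ} (h : A ⊆ B) (k : ℕ) : itSum k A ⊆ itSum k B := by
  induction k with
  | zero => simp [itSum_zero]
  | succ n ih => exact Finset.add_subset_add h ih

lemma zero_mem_itSum {A : Finset ℤ} (h0 : (0:ℤ) ∈ A) (k : ℕ) : (0:ℤ) ∈ itSum k A := by
  induction k with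
  | zero => simp [itSum_zero]
  | succ n ih =>
    have := Finset.add_mem_add h0 ih
    rw [itSum_succ]
    simpa using this

lemma itSum_mono_index {A : Finset ℤ} (h0 : (0:ℤ) ∈ A) {j k : ℕ} (h : j ≤ k) :
    itSum j A ⊆ itSum k A := by
  intro x hx
  obtain ⟨d, rfl⟩ := Nat.exists_eq_add_of_le h
  rw [itSum_add]
  have := Finset.add_mem_add hx (zero_mem_itSum h0 d)
  simpa using this

lemma itSum_bounds {A : Finset ℤ} {M : ℤ} (hnn : ∀ a ∈ A, 0 ≤ a) (hub : ∀ a ∈ A, a ≤ M)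
    {k : ℕ} {x : ℤ} (hx : x ∈ itSum k A) : 0 ≤ x ∧ x ≤ (k:ℤ) * M := by
  induction k generalizing x with
  | zero => simp [itSum_zero] at hx; simp [hx]
  | succ n ih =>
    rw [itSum_succ, Finset.mem_add] at hx
    obtain ⟨a, ha, y, hy, rfl⟩ := hx
    obtain ⟨h1, h2⟩ := ih hy
    constructor
    · have := hnn a ha; omega
    · have := hub a ha
      push_cast
      nlinarith

lemma smul_max_mem {A : Finset ℤ} {M : ℤ} (hM : M ∈ A) (k : ℕ) :
    (k:ℤ) * M ∈ itSum k A := by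
  induction k with
  | zero => simp [itSum_zero]
  | succ n ih =>
    have h2 := Finset.add_mem_add hM ih
    rw [itSum_succ]
    have : ((n:ℤ)+1) * M = M + (n:ℤ) * M := by ring
    push_cast
    rw [this]
    exact h2

lemma itSum_compress {A : Finset ℤ} (h0 : (0:ℤ) ∈ A) (hnn : ∀ a ∈ A, 0 ≤ a)
    {j : ℕ} {x : ℤ} (hx : x ∈ itSum j A) {n : ℕ} (hn : x ≤ (n:ℤ)) : x ∈ itSum n A := by
  induction j generalizing x n with
  | zero => simp [itSum_zero] at hx; subst hx; exact zero_mem_itSum h0 n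
  | succ m ih =>
    rw [itSum_succ, Finset.mem_add] at hx
    obtain ⟨a, ha, y, hy, rfl⟩ := hx
    have hM : ∀ a ∈ A, a ≤ A.max' ⟨0, h0⟩ := fun a ha => Finset.le_max' A a ha
    have hy0 : 0 ≤ y := (itSum_bounds hnn hM hy).1
    rcases eq_or_lt_of_le (hnn a ha) with h | h
    · rw [← h, zero_add] at hn ⊢
      exact ih hy hn
    · match n with
      | 0 => omega
      | n'+1 =>
        have hyn : y ≤ (n' : ℤ) := by push_cast at hn ⊢; omega
        exact Finset.add_mem_add ha (ih hy hyn)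
lemma refl_mem {B : Finset ℤ} {M : ℤ} {k : ℕ} {x : ℤ} (hx : x ∈ itSum k B) :
    (k:ℤ) * M - x ∈ itSum k (B.image (fun b => M - b)) := by
  induction k generalizing x with
  | zero => simp [itSum_zero] at hx ⊢; omega
  | succ n ih =>
    rw [itSum_succ, Finset.mem_add] at hx
    obtain ⟨a, ha, y, hy, rfl⟩ := hx
    have h1 : M - a ∈ B.image (fun b => M - b) := Finset.mem_image_of_mem _ ha
    have h2 := ih hy
    have := Finset.add_mem_add h1 h2
    rw [itSum_succ]
    have heq : ((n:ℤ)+1) * M - (a + y) = (M - a) + ((n:ℤ) * M - y) := by ring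
    push_cast
    rw [heq]
    exact this

lemma image_refl_refl (B : Finset ℤ) (M : ℤ) :
    ((B.image (fun b => M - b)).image (fun b => M - b)) = B := by
  rw [Finset.image_image]
  have : ((fun b => M - b) ∘ (fun b => M - b)) = id := by
    funext x; simp
  rw [this, Finset.image_id]

lemma zsmul_mem_itSum {B : Finset ℤ} {x : ℤ} {u : ℕ} (hx : x ∈ itSum u B) (n : ℕ) :
    (n:ℤ) * x ∈ itSum (n * u) B := by
  induction n with
  | zero => simp [itSum_zero]
  | succ m ih =>
    have := mem_itSum_add hx ih
    have heq : ((m:ℤ)+1) * x = x + (m:ℤ) * x := by ring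
    have heq2 : (m+1) * u = u + m * u := by ring
    rw [heq2]
    push_cast
    rw [heq]
    exact this

lemma exists_bezout {B : Finset ℤ} (hg : B.gcd id = 1) :
    ∃ (u v : ℕ) (p q : ℤ), p ∈ itSum u B ∧ q ∈ itSum v B ∧ p - q = 1 := by
  classical
  let G : AddSubgroup ℤ :=
    { carrier := {x | ∃ (u v : ℕ) (p q : ℤ), p ∈ itSum u B ∧ q ∈ itSum v B ∧ x = p - q}
      zero_mem' := ⟨0, 0, 0, 0, by simp [itSum_zero], by simp [itSum_zero], by ring⟩
      add_mem' := by
        rintro a b ⟨u, v, p, q, hp, hq, rfl⟩ ⟨u', v', p', q', hp', hq', rfl⟩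
        exact ⟨u + u', v + v', p + p', q + q', mem_itSum_add hp hp',
          mem_itSum_add hq hq', by ring⟩
      neg_mem' := by
        rintro a ⟨u, v, p, q, hp, hq, rfl⟩
        exact ⟨v, u, q, p, hq, hp, by ring⟩ }
  have hBG : ∀ b ∈ B, b ∈ G := by
    intro b hb
    exact ⟨1, 0, b, 0, by rwa [itSum_one], by simp [itSum_zero], by ring⟩
  obtain ⟨g, hGg⟩ := Int.subgroup_cyclic G
  have hdvd : ∀ b ∈ B, g ∣ b := by
    intro b hb
    have := hBG b hb
    rw [hGg, AddSubgroup.mem_closure_singleton] at this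
    obtain ⟨n, hn⟩ := this
    exact ⟨n, by rw [← hn, zsmul_int_int]; ring⟩
  have hg1 : g ∣ 1 := by
    rw [← hg]
    exact Finset.dvd_gcd hdvd
  have h1G : (1:ℤ) ∈ G := by
    rw [hGg, AddSubgroup.mem_closure_singleton]
    rcases Int.isUnit_iff.mp (isUnit_of_dvd_one hg1) with h | h
    · exact ⟨1, by simp [h]⟩
    · exact ⟨-1, by simp [h]⟩
  obtain ⟨u, v, p, q, hp, hq, h1⟩ := h1G
  exact ⟨u, v, p, q, hp, hq, h1.symm⟩

lemma interval_lemma {B : Finset ℤ} {M : ℤ} (h0 : (0:ℤ) ∈ B) (hnn : ∀ b ∈ B, 0 ≤ b)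
    (hMm : M ∈ B) (hub : ∀ b ∈ B, b ≤ M) (hM1 : 1 ≤ M) (hg : B.gcd id = 1) :
    ∃ N : ℕ, 0 < N ∧ ∀ (k : ℕ) (x : ℤ), (N:ℤ) ≤ x → x ≤ (k:ℤ) * M - N →
      x ∈ itSum k B := by
  obtain ⟨u, v, p, q, hp, hq, hpq⟩ := exists_bezout hg
  have hq0 : 0 ≤ q := (itSum_bounds hnn hub hq).1
  have hp0 : 0 ≤ p := (itSum_bounds hnn hub hp).1
  set m : ℕ := M.toNat with hm
  have hmM : (m:ℤ) = M := Int.toNat_of_nonneg (by omega)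
  set J : ℕ := (m - 1) * (u + v) with hJ
  set c : ℤ := ((m:ℤ) - 1) * q with hc
  have hc0 : 0 ≤ c := mul_nonneg (by omega) hq0
  -- key: every x ≥ c is in itSum j B with j*M ≤ x + J*M
  have key : ∀ x : ℤ, c ≤ x → ∃ j : ℕ, x ∈ itSum j B ∧ (j:ℤ) * M ≤ x + (J:ℤ) * M := by
    intro x hx
    set r : ℤ := (x - c) % M with hr
    have hr0 : 0 ≤ r := Int.emod_nonneg _ (by omega)
    have hrM : r < M := Int.emod_lt_of_pos _ (by omega)
    -- s_r = c + r  ∈ itSum (r*u + (m-1-r)*v) B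
    have hrn : (r.toNat : ℤ) = r := Int.toNat_of_nonneg hr0
    have hrm : r.toNat ≤ m - 1 := by omega
    have hs1 : (r.toNat : ℤ) * p ∈ itSum (r.toNat * u) B := zsmul_mem_itSum hp _
    have hs2 : ((m - 1 - r.toNat : ℕ) : ℤ) * q ∈ itSum ((m - 1 - r.toNat) * v) B :=
      zsmul_mem_itSum hq _
    have hsr : c + r ∈ itSum J B := by
      have hmem := mem_itSum_add hs1 hs2
      have hidx : r.toNat * u + (m - 1 - r.toNat) * v ≤ J := by
        rw [hJ]
        have h1 : r.toNat * u ≤ (m-1) * u := Nat.mul_le_mul_right _ hrm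
        have h2 : (m - 1 - r.toNat) * v ≤ (m-1) * v := Nat.mul_le_mul_right _ (by omega)
        calc r.toNat * u + (m - 1 - r.toNat) * v ≤ (m-1)*u + (m-1)*v := by omega
        _ = (m-1)*(u+v) := by ring
      have hval : (r.toNat : ℤ) * p + ((m - 1 - r.toNat : ℕ) : ℤ) * q = c + r := by
        have : ((m - 1 - r.toNat : ℕ) : ℤ) = (m:ℤ) - 1 - r.toNat := by
          push_cast [Nat.cast_sub (by omega : r.toNat ≤ m - 1), Nat.cast_sub (by omega : 1 ≤ m)]
          ring
        rw [this, hrn, hc]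
        nlinarith [hpq]
      rw [hval] at hmem
      exact itSum_mono_index h0 hidx hmem
    -- t := (x - c)/M
    have hdm := Int.mul_ediv_add_emod (x - c) M
    set t : ℤ := (x - c) / M with ht
    have ht0 : 0 ≤ t := Int.ediv_nonneg (by omega) (by omega)
    have htn : ((t.toNat : ℕ) : ℤ) = t := Int.toNat_of_nonneg ht0
    have hcomm : M * t = t * M := mul_comm M t
    have hxeq : x = (c + r) + (t.toNat : ℤ) * M := by rw [htn]; linarith [hdm]
    have htM : (t.toNat : ℤ) * M ∈ itSum t.toNat B := smul_max_mem hMm _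
    refine ⟨J + t.toNat, ?_, ?_⟩
    · rw [hxeq]; exact mem_itSum_add hsr htM
    · have h1 : (t:ℤ) * M = x - c - r := by linarith [hdm]
      push_cast
      rw [add_mul, htn]
      linarith [h1, hr0, hc0]
  -- now choose N
  refine ⟨max (c.toNat + 1) (J * m + 1), by positivity, ?_⟩
  intro k x hNx hxk
  set N : ℕ := max (c.toNat + 1) (J * m + 1) with hN
  have hNc : c ≤ (N:ℤ) := by
    have : c ≤ (c.toNat : ℤ) := by omega
    have h2 : (c.toNat : ℤ) + 1 ≤ (N:ℤ) := by exact_mod_cast Nat.le_max_left _ _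
    omega
  have hNJ : (J:ℤ) * M ≤ (N:ℤ) := by
    have h2 : ((J * m + 1 : ℕ) : ℤ) ≤ (N:ℤ) := by exact_mod_cast Nat.le_max_right _ _
    push_cast at h2
    rw [hmM] at h2
    linarith
  obtain ⟨j, hj, hjM⟩ := key x (le_trans hNc hNx)
  have hjk : j ≤ k := by
    have hMpos : (0:ℤ) < M := by omega
    have hle : (j:ℤ) * M ≤ (k:ℤ) * M := by linarith [hjM, hNJ, hxk, hNx]
    have := le_of_mul_le_mul_right hle hMpos
    exact_mod_cast this
  exact itSum_mono_index h0 hjk hj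
lemma gdiff_mem {A : Finset ℤ} {k : ℕ} {x y : ℤ} (hx : x ∈ itSum k A)
    (hy : y ∈ itSum k A) : x - y ∈ gDiff k k A := by
  rw [gDiff, Finset.mem_sub]
  exact ⟨x, hx, y, hy, rfl⟩

theorem normalized_main {B : Finset ℤ} {M : ℤ} (h0 : (0:ℤ) ∈ B) (hnn : ∀ b ∈ B, 0 ≤ b)
    (hMm : M ∈ B) (hub : ∀ b ∈ B, b ≤ M) (hM1 : 1 ≤ M) (hg : B.gcd id = 1) :
    ∃ N0 : ℕ, ∀ k : ℕ, N0 ≤ k → (gDiff k k B).card ≥ (itSum (2*k) B).card := by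
  classical
  obtain ⟨N, hNpos, hint⟩ := interval_lemma h0 hnn hMm hub hM1 hg
  set B' : Finset ℤ := B.image (fun b => M - b) with hB'
  have h0' : (0:ℤ) ∈ B' := by
    rw [hB', Finset.mem_image]; exact ⟨M, hMm, by ring⟩
  have hnn' : ∀ b ∈ B', 0 ≤ b := by
    intro b hb
    rw [hB', Finset.mem_image] at hb
    obtain ⟨a, ha, rfl⟩ := hb
    have := hub a ha; omega
  set Cb : Finset ℤ := (itSum N B) ∩ Finset.Icc 0 ((N:ℤ)-1) with hCb
  set Ct : Finset ℤ := (itSum N B') ∩ Finset.Icc 0 ((N:ℤ)-1) with hCt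
  refine ⟨4 * N, ?_⟩
  intro k hk
  set K : ℤ := (k:ℤ) * M with hK
  have hKN : 4 * (N:ℤ) ≤ K := by
    have : ((4*N : ℕ):ℤ) ≤ (k:ℤ) := by exact_mod_cast hk
    push_cast at this
    nlinarith
  have hNk : N ≤ k := by
    have : (N:ℤ) ≤ (k:ℤ) := by nlinarith [hKN]
    exact_mod_cast this
  -- upper bound for itSum (2k) B
  have hupper : itSum (2*k) B ⊆
      Cb ∪ Finset.Icc (N:ℤ) (2*K - N) ∪ Ct.image (fun x => 2*K - x) := by
    intro x hx
    have hbd := itSum_bounds hnn hub hx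
    have h2K : ((2*k : ℕ):ℤ) * M = 2*K := by push_cast; ring
    rw [h2K] at hbd
    rcases lt_or_ge x (N:ℤ) with h | h
    · apply Finset.mem_union_left
      apply Finset.mem_union_left
      rw [hCb, Finset.mem_inter]
      refine ⟨itSum_compress h0 hnn hx (by omega), ?_⟩
      rw [Finset.mem_Icc]; omega
    · rcases le_or_gt x (2*K - N) with h2 | h2
      · apply Finset.mem_union_left
        apply Finset.mem_union_right
        rw [Finset.mem_Icc]; exact ⟨h, h2⟩
      · apply Finset.mem_union_right
        rw [Finset.mem_image]
        refine ⟨2*K - x, ?_, by ring⟩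
        have hrefl := refl_mem (M := M) hx
        rw [h2K] at hrefl
        rw [hCt, Finset.mem_inter]
        refine ⟨itSum_compress h0' hnn' hrefl (by omega), ?_⟩
        rw [Finset.mem_Icc]
        omega
  -- key membership
  have hkeymem : ∀ x ∈ Cb ∪ Ct, (K - x ∈ gDiff k k B) ∧ (x - K ∈ gDiff k k B) := by
    intro x hx
    rcases Finset.mem_union.mp hx with hx | hx
    · rw [hCb, Finset.mem_inter, Finset.mem_Icc] at hx
      have hx1 : x ∈ itSum k B := itSum_mono_index h0 hNk hx.1
      have hKmem : K ∈ itSum k B := smul_max_mem hMm k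
      exact ⟨gdiff_mem hKmem hx1, gdiff_mem hx1 hKmem⟩
    · rw [hCt, Finset.mem_inter, Finset.mem_Icc] at hx
      have hrefl := refl_mem (M := M) hx.1
      rw [image_refl_refl] at hrefl
      have hsm : ((k - N : ℕ):ℤ) * M ∈ itSum (k - N) B := smul_max_mem hMm _
      have hmem := mem_itSum_add hsm hrefl
      have hidx : (k - N) + N = k := by omega
      rw [hidx] at hmem
      have heq : ((k - N : ℕ):ℤ) * M + ((N:ℤ) * M - x) = K - x := by
        have : ((k - N : ℕ):ℤ) = (k:ℤ) - N := by
          push_cast [Nat.cast_sub hNk]; ring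
        rw [this, hK]; ring
      rw [heq] at hmem
      have h0k : (0:ℤ) ∈ itSum k B := zero_mem_itSum h0 k
      constructor
      · have := gdiff_mem hmem h0k; rwa [sub_zero] at this
      · have := gdiff_mem h0k hmem; rwa [zero_sub, neg_sub] at this
  -- interval membership in the difference set
  have hKint : ∀ z : ℤ, 0 ≤ z → z ≤ K - N → z ∈ gDiff k k B := by
    intro z hz0 hz1
    rcases le_or_gt z (K - 2*N) with h | h
    · have h1 : z + N ∈ itSum k B := hint k (z + N) (by omega) (by omega)
      have h2 : (N:ℤ) ∈ itSum k B := hint k N (le_refl _) (by omega)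
      have := gdiff_mem h1 h2
      rwa [add_sub_cancel_right] at this
    · have h1 : K - z ∈ itSum k B := hint k (K - z) (by omega) (by omega)
      have hKmem : K ∈ itSum k B := smul_max_mem hMm k
      have := gdiff_mem hKmem h1
      rwa [sub_sub_cancel] at this
  -- the lower-bound set
  set U : Finset ℤ := Cb ∪ Ct with hU
  set L : Finset ℤ := (Finset.Icc (-(K-N)) (K-N) ∪ U.image (fun x => K - x))
      ∪ U.image (fun x => x - K) with hL
  have hLsub : L ⊆ gDiff k k B := by
    intro z hz
    rcases Finset.mem_union.mp hz with hz | hz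
    · rcases Finset.mem_union.mp hz with hz | hz
      · rw [Finset.mem_Icc] at hz
        rcases le_or_gt 0 z with h | h
        · exact hKint z h hz.2
        · have := hKint (-z) (by omega) (by omega)
          rw [gDiff, Finset.mem_sub] at this ⊢
          obtain ⟨b, hb, c, hc, hbc⟩ := this
          exact ⟨c, hc, b, hb, by omega⟩
      · rw [Finset.mem_image] at hz
        obtain ⟨x, hx, rfl⟩ := hz
        exact (hkeymem x hx).1
    · rw [Finset.mem_image] at hz
      obtain ⟨x, hx, rfl⟩ := hz
      exact (hkeymem x hx).2
  -- bounds on U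
  have hUbd : ∀ x ∈ U, 0 ≤ x ∧ x ≤ (N:ℤ) - 1 := by
    intro x hx
    rcases Finset.mem_union.mp hx with hx | hx
    · rw [hCb, Finset.mem_inter, Finset.mem_Icc] at hx; exact hx.2
    · rw [hCt, Finset.mem_inter, Finset.mem_Icc] at hx; exact hx.2
  -- card of L
  have hinj1 : Set.InjOn (fun x => K - x) U := fun a _ b _ h => by simpa using h
  have hinj2 : Set.InjOn (fun x => x - K) U := fun a _ b _ h => by simpa using h
  have hd1 : Disjoint (Finset.Icc (-(K-N)) (K-N)) (U.image (fun x => K - x)) := by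
    rw [Finset.disjoint_right]
    intro z hz hz2
    rw [Finset.mem_image] at hz
    obtain ⟨x, hx, rfl⟩ := hz
    rw [Finset.mem_Icc] at hz2
    have := hUbd x hx
    omega
  have hd2 : Disjoint (Finset.Icc (-(K-N)) (K-N) ∪ U.image (fun x => K - x))
      (U.image (fun x => x - K)) := by
    rw [Finset.disjoint_right]
    intro z hz hz2
    rw [Finset.mem_image] at hz
    obtain ⟨x, hx, rfl⟩ := hz
    have hxb := hUbd x hx
    rcases Finset.mem_union.mp hz2 with h | h
    · rw [Finset.mem_Icc] at h; omega
    · rw [Finset.mem_image] at h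
      obtain ⟨y, hy, hyz⟩ := h
      have := hUbd y hy
      omega
  have hcardL : L.card = (2*(K-N)+1).toNat + U.card + U.card := by
    rw [hL, Finset.card_union_of_disjoint hd2, Finset.card_union_of_disjoint hd1,
      Finset.card_image_of_injOn hinj1, Finset.card_image_of_injOn hinj2,
      Int.card_Icc]
    congr 1
    congr 1
    omega
  -- card upper bound
  have hcardup : (itSum (2*k) B).card ≤ Cb.card + (2*(K-N)+1).toNat + Ct.card := by
    calc (itSum (2*k) B).card
        ≤ (Cb ∪ Finset.Icc (N:ℤ) (2*K - N) ∪ Ct.image (fun x => 2*K - x)).card :=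
          Finset.card_le_card hupper
      _ ≤ (Cb ∪ Finset.Icc (N:ℤ) (2*K - N)).card + (Ct.image (fun x => 2*K - x)).card :=
          Finset.card_union_le _ _
      _ ≤ Cb.card + (Finset.Icc (N:ℤ) (2*K - N)).card + Ct.card := by
          have h1 := Finset.card_union_le Cb (Finset.Icc (N:ℤ) (2*K - N))
          have h2 := Finset.card_image_le (s := Ct) (f := fun x => 2*K - x)
          omega
      _ = Cb.card + (2*(K-N)+1).toNat + Ct.card := by
          rw [Int.card_Icc]
          congr 2
          omega
  -- finish
  have hUcard : Cb.card + Ct.card ≤ U.card + U.card := by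
    have h1 : Cb.card ≤ U.card := Finset.card_le_card (Finset.subset_union_left)
    have h2 : Ct.card ≤ U.card := Finset.card_le_card (Finset.subset_union_right)
    omega
  have := Finset.card_le_card hLsub
  omega
lemma itSum_affine (g t : ℤ) (S : Finset ℤ) (k : ℕ) :
    itSum k (S.image (fun x => g*x + t)) = (itSum k S).image (fun x => g*x + (k:ℤ)*t) := by
  induction k with
  | zero => simp [itSum_zero]
  | succ n ih =>
    rw [itSum_succ, ih, itSum_succ]
    ext a
    simp only [Finset.mem_add, Finset.mem_image]
    constructor
    · rintro ⟨b, ⟨x, hx, rfl⟩, c, ⟨y, hy, rfl⟩, rfl⟩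
      refine ⟨x + y, ⟨x, hx, y, hy, rfl⟩, ?_⟩
      push_cast; ring
    · rintro ⟨z, ⟨x, hx, y, hy, rfl⟩, rfl⟩
      refine ⟨g*x + t, ⟨x, hx, rfl⟩, g*y + (n:ℤ)*t, ⟨y, hy, rfl⟩, ?_⟩
      push_cast; ring

lemma affine_injOn (g t : ℤ) (hg : g ≠ 0) (S : Finset ℤ) :
    Set.InjOn (fun x => g*x + t) S := by
  intro a _ b _ h
  simp only at h
  have : g * a = g * b := by omega
  exact mul_left_cancel₀ hg this

lemma card_itSum_affine (g t : ℤ) (hg : g ≠ 0) (S : Finset ℤ) (k : ℕ) :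
    (itSum k (S.image (fun x => g*x + t))).card = (itSum k S).card := by
  rw [itSum_affine, Finset.card_image_of_injOn (affine_injOn g _ hg _)]

lemma card_gDiff_affine (g t : ℤ) (hg : g ≠ 0) (S : Finset ℤ) (k : ℕ) :
    (gDiff k k (S.image (fun x => g*x + t))).card = (gDiff k k S).card := by
  have himg : gDiff k k (S.image (fun x => g*x + t))
      = (gDiff k k S).image (fun z => g*z) := by
    rw [gDiff, gDiff, itSum_affine]
    ext a
    simp only [Finset.mem_sub, Finset.mem_image]
    constructor
    · rintro ⟨b, ⟨x, hx, rfl⟩, c, ⟨y, hy, rfl⟩, rfl⟩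
      exact ⟨x - y, ⟨x, hx, y, hy, rfl⟩, by ring⟩
    · rintro ⟨z, ⟨x, hx, y, hy, rfl⟩, rfl⟩
      exact ⟨g*x + (k:ℤ)*t, ⟨x, hx, rfl⟩, g*y + (k:ℤ)*t, ⟨y, hy, rfl⟩, by ring⟩
  rw [himg, Finset.card_image_of_injOn]
  intro a _ b _ h
  exact mul_left_cancel₀ hg h

lemma itSum_singleton (a : ℤ) (k : ℕ) : itSum k {a} = {(k:ℤ) * a} := by
  induction k with
  | zero => simp [itSum_zero]
  | succ n ih =>
    rw [itSum_succ, ih]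
    ext x
    simp only [Finset.mem_add, Finset.mem_singleton]
    constructor
    · rintro ⟨b, rfl, c, rfl, rfl⟩; push_cast; ring
    · rintro rfl; exact ⟨a, rfl, (n:ℤ)*a, rfl, by push_cast; ring⟩

theorem main_general (A : Finset ℤ) (hne : A.Nonempty) :
    ∃ N : ℕ, ∀ k : ℕ, N ≤ k → (gDiff k k A).card ≥ (itSum (2*k) A).card := by
  classical
  set a0 : ℤ := A.min' hne with ha0
  set A2 : Finset ℤ := A.image (fun x => x - a0) with hA2
  set g : ℤ := A2.gcd id with hgdef
  by_cases hg0 : g = 0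
  · -- then A2 = {0}, A = {a0}
    have hall : ∀ x ∈ A2, x = 0 := by
      intro x hx
      have := Finset.gcd_eq_zero_iff.mp hg0 x hx
      simpa using this
    have hAsing : A = {a0} := by
      apply Finset.Subset.antisymm
      · intro x hx
        have : x - a0 ∈ A2 := by rw [hA2]; exact Finset.mem_image_of_mem _ hx
        have := hall _ this
        simp only [Finset.mem_singleton]
        omega
      · intro x hx
        simp only [Finset.mem_singleton] at hx
        subst hx
        exact A.min'_mem hne
    refine ⟨0, fun k _ => ?_⟩
    rw [hAsing, gDiff, itSum_singleton, itSum_singleton]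
    rw [Finset.singleton_sub_singleton]
    simp
  · -- normalize
    have hgpos : 0 < g := by
      have h1 : 0 ≤ g := Int.nonneg_of_normalize_eq_self Finset.normalize_gcd
      omega
    set B : Finset ℤ := A2.image (fun x => x / g) with hB
    have hdvd : ∀ x ∈ A2, g ∣ x := fun x hx => Finset.gcd_dvd hx
    have hBA2 : B.image (fun x => g * x) = A2 := by
      rw [hB, Finset.image_image]
      have : Set.EqOn ((fun x => g * x) ∘ (fun x => x / g)) id A2 := by
        intro x hx
        simp only [Function.comp_apply, id_eq]
        exact Int.mul_ediv_cancel' (hdvd x hx)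
      rw [Finset.image_congr this, Finset.image_id]
    have hAB : A = B.image (fun x => g * x + a0) := by
      have h1 : A2.image (fun x => x + a0) = A := by
        rw [hA2, Finset.image_image]
        have : Set.EqOn ((fun x => x + a0) ∘ (fun x => x - a0)) id A := by
          intro x hx; simp
        rw [Finset.image_congr this, Finset.image_id]
      rw [← h1, ← hBA2, Finset.image_image]
      rfl
    -- properties of B
    have h0B : (0:ℤ) ∈ B := by
      rw [hB, Finset.mem_image]
      refine ⟨0, ?_, by simp⟩
      rw [hA2, Finset.mem_image]
      exact ⟨a0, A.min'_mem hne, by ring⟩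
    have hnnB : ∀ b ∈ B, 0 ≤ b := by
      intro b hb
      rw [hB, Finset.mem_image] at hb
      obtain ⟨x, hx, rfl⟩ := hb
      have hx0 : 0 ≤ x := by
        rw [hA2, Finset.mem_image] at hx
        obtain ⟨y, hy, rfl⟩ := hx
        have := A.min'_le y hy
        omega
      exact Int.ediv_nonneg hx0 (by omega)
    have hgB : B.gcd id = 1 := by
      have h1 : A2.gcd id = B.gcd (fun x => g * x) := by
        rw [← hBA2, Finset.gcd_image]
        rfl
      have h2 : B.gcd (fun x => g * x) = normalize g * B.gcd id := by
        have := Finset.gcd_mul_left (s := B) (f := (id : ℤ → ℤ)) (a := g)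
        simpa using this
      rw [Int.normalize_of_nonneg (by omega)] at h2
      have h3 : g = g * B.gcd id := hgdef.trans (h1.trans h2)
      have h4 : g * 1 = g * B.gcd id := by rw [mul_one]; exact h3
      exact (mul_left_cancel₀ hg0 h4).symm
    have hBne : B.Nonempty := ⟨0, h0B⟩
    set M : ℤ := B.max' hBne with hM
    have hMm : M ∈ B := B.max'_mem hBne
    have hub : ∀ b ∈ B, b ≤ M := fun b hb => B.le_max' b hb
    have hM1 : 1 ≤ M := by
      -- A2 has a nonzero element
      have : ∃ x ∈ A2, x ≠ 0 := by
        by_contra h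
        push_neg at h
        have : A2.gcd id = 0 := Finset.gcd_eq_zero_iff.mpr (by
          intro x hx; simpa using h x hx)
        rw [← hgdef] at this
        exact hg0 this
      obtain ⟨x, hx, hxne⟩ := this
      have hx0 : 0 ≤ x := by
        rw [hA2, Finset.mem_image] at hx
        obtain ⟨y, hy, rfl⟩ := hx
        have := A.min'_le y hy
        omega
      have hxB : x / g ∈ B := by
        rw [hB]; exact Finset.mem_image_of_mem _ hx
      have h1 : x / g ≠ 0 := by
        intro h
        have := Int.mul_ediv_cancel' (hdvd x hx)
        rw [h, mul_zero] at this
        exact hxne this.symm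
      have h2 : 0 ≤ x / g := Int.ediv_nonneg hx0 (by omega)
      have := hub _ hxB
      omega
    obtain ⟨N0, hN0⟩ := normalized_main h0B hnnB hMm hub hM1 hgB
    refine ⟨N0, fun k hk => ?_⟩
    rw [hAB, card_gDiff_affine g a0 hg0 B k, card_itSum_affine g a0 hg0 B (2*k)]
    exact hN0 k hk

theorem stmt_6 (A : Finset ℤ) (hne : A.Nonempty) :
    (∃ N : ℕ, ∀ k : ℕ, N ≤ k →
      (gDiff k k A).card ≥ (itSum (2 * k) A).card) ∧
    ¬ (∀ c : ℕ, 1 ≤ c → (itSum (2 * c) A).card > (gDiff c c A).card) := by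
  obtain ⟨N, hN⟩ := main_general A hne
  refine ⟨⟨N, hN⟩, ?_⟩
  intro h
  have h1 := h (max N 1) (Nat.le_max_right _ _)
  have h2 := hN (max N 1) (Nat.le_max_left _ _)
  omega
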